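/- For every positive integer n divisible by 8 there exists a matching independent probability distribution μ on the simple graphs with vertex set {1,...,n} such that every unordered pair e of distinct vertices satisfies Pr[X_e] = 1/2 (indeed, every nonempty matching M satisfies Pr[all edges of M present] = 2^{−|M|}), and every graph in the support of μ is disconnected. -/

import Mathlib

open scoped Classical

noncomputable def pr {n : ℕ} (μ : SimpleGraph (Fin n) → ℝ) (P : SimpleGraph (Fin n) → Prop) : ℝ :=
  ∑ G : SimpleGraph (Fin n), if P G then μ G else 0

def IsDist {n : ℕ} (μ : SimpleGraph (Fin n) → ℝ) : Prop :=
  (∀ G, 0 ≤ μ G) ∧ ∑ G : SimpleGraph (Fin n), μ G = 1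

def IsMatchingSet {n : ℕ} (M : Finset (Sym2 (Fin n))) : Prop :=
  (∀ e ∈ M, ¬ e.IsDiag) ∧
    ∀ e ∈ M, ∀ f ∈ M, e ≠ f → ∀ v : Fin n, v ∈ e → v ∉ f

def MatchingIndep {n : ℕ} (μ : SimpleGraph (Fin n) → ℝ) : Prop :=
  ∀ M : Finset (Sym2 (Fin n)), IsMatchingSet M →
    ∀ S ⊆ M, pr μ (fun G => ∀ e ∈ S, e ∈ G.edgeSet)
      = ∏ e ∈ S, pr μ (fun G => e ∈ G.edgeSet)

namespace MIHD

variable {n : ℕ}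

def twoClique (A : Finset (Fin n)) : SimpleGraph (Fin n) where
  Adj x y := x ≠ y ∧ (x ∈ A ↔ y ∈ A)
  symm := by
    constructor
    intro x y h
    exact ⟨h.1.symm, h.2.symm⟩
  loopless := by
    constructor
    intro x h
    exact h.1 rfl

def Cpt (A : Finset (Fin n)) (S : Finset (Sym2 (Fin n))) : Prop :=
  ∀ e ∈ S, ∀ x ∈ e, ∀ y ∈ e, (x ∈ A ↔ y ∈ A)

lemma cpt_insert_of_not_mem {A : Finset (Fin n)} {S : Finset (Sym2 (Fin n))} {x : Fin n}
    (hx : ∀ f ∈ S, x ∉ f) : Cpt (insert x A) S ↔ Cpt A S := by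
  unfold Cpt
  constructor <;> intro h e he a ha b hb
  · have := h e he a ha b hb
    have hax : a ≠ x := fun h' => hx e he (h' ▸ ha)
    have hbx : b ≠ x := fun h' => hx e he (h' ▸ hb)
    simpa [Finset.mem_insert, hax, hbx] using this
  · have := h e he a ha b hb
    have hax : a ≠ x := fun h' => hx e he (h' ▸ ha)
    have hbx : b ≠ x := fun h' => hx e he (h' ▸ hb)
    simp [Finset.mem_insert, hax, hbx, this]

lemma key {R : Type*} [CommRing R] (z : R) (S : Finset (Sym2 (Fin n))) (W : Finset (Fin n))
    (hM : IsMatchingSet S) (hW : ∀ e ∈ S, ∀ v ∈ e, v ∈ W) :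
    ∑ A ∈ W.powerset, (if Cpt A S then z ^ A.card else 0)
      = (1 + z ^ 2) ^ S.card * (1 + z) ^ (W.card - 2 * S.card) := by
  induction S using Finset.induction generalizing W with
  | empty =>
      have hC : ∀ A : Finset (Fin n), Cpt A ∅ := fun A e he => absurd he (Finset.notMem_empty e)
      have h1 : ∑ A ∈ W.powerset, (if Cpt A ∅ then z ^ A.card else 0)
          = ∑ A ∈ W.powerset, z ^ A.card :=
        Finset.sum_congr rfl (fun A _ => if_pos (hC A))
      have h2 := Finset.prod_add (fun _ : Fin n => z) (fun _ : Fin n => (1 : R)) W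
      simp only [Finset.prod_const, one_pow, mul_one] at h2
      rw [h1, ← h2]
      simp [add_comm]
  | @insert e S' he ih =>
      -- get representation e = s(u,v)
      obtain ⟨u, v, rfl⟩ : ∃ u v, e = s(u, v) := by
        induction e using Sym2.ind with
        | _ x y => exact ⟨x, y, rfl⟩
      have hne : u ≠ v := by
        have := hM.1 _ (Finset.mem_insert_self _ _)
        simpa [Sym2.mk_isDiag_iff] using this
      have huW : u ∈ W := hW _ (Finset.mem_insert_self _ _) u (Sym2.mem_mk_left u v)
      have hvW : v ∈ W := hW _ (Finset.mem_insert_self _ _) v (Sym2.mem_mk_right u v)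
      -- u, v do not belong to edges of S'
      have hu_not : ∀ f ∈ S', u ∉ f := by
        intro f hf
        exact hM.2 _ (Finset.mem_insert_self _ _) f (Finset.mem_insert_of_mem hf)
          (fun h => he (h ▸ hf)) u (Sym2.mem_mk_left u v)
      have hv_not : ∀ f ∈ S', v ∉ f := by
        intro f hf
        exact hM.2 _ (Finset.mem_insert_self _ _) f (Finset.mem_insert_of_mem hf)
          (fun h => he (h ▸ hf)) v (Sym2.mem_mk_right u v)
      have hM' : IsMatchingSet S' := by
        refine ⟨fun f hf => hM.1 f (Finset.mem_insert_of_mem hf), ?_⟩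
        intro a ha b hb hab
        exact hM.2 a (Finset.mem_insert_of_mem ha) b (Finset.mem_insert_of_mem hb) hab
      set W' : Finset (Fin n) := (W.erase u).erase v with hW'def
      have hvW' : v ∉ W' := Finset.notMem_erase _ _
      have huW'v : u ∉ insert v W' := by
        simp only [Finset.mem_insert, W', hW'def]
        push_neg
        exact ⟨hne, fun h => (Finset.notMem_erase u W) (Finset.mem_of_mem_erase h)⟩
      have hWeq : insert u (insert v W') = W := by
        rw [hW'def, Finset.insert_erase (Finset.mem_erase.mpr ⟨hne.symm, hvW⟩),
          Finset.insert_erase huW]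
      have hW'sub : ∀ f ∈ S', ∀ w ∈ f, w ∈ W' := by
        intro f hf w hw
        have hwW : w ∈ W := hW f (Finset.mem_insert_of_mem hf) w hw
        have hwu : w ≠ u := fun h => hu_not f hf (h ▸ hw)
        have hwv : w ≠ v := fun h => hv_not f hf (h ▸ hw)
        exact Finset.mem_erase.mpr ⟨hwv, Finset.mem_erase.mpr ⟨hwu, hwW⟩⟩
      have hcard : W'.card = W.card - 2 := by
        rw [hW'def, Finset.card_erase_of_mem (Finset.mem_erase.mpr ⟨hne.symm, hvW⟩),
          Finset.card_erase_of_mem huW]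
        omega
      have hWcard : 2 ≤ W.card := by
        have hsub : ({u, v} : Finset (Fin n)) ⊆ W := by
          intro w hw
          rcases Finset.mem_insert.mp hw with h | h
          · exact h ▸ huW
          · exact (Finset.mem_singleton.mp h) ▸ hvW
        have h2 : ({u, v} : Finset (Fin n)).card = 2 := Finset.card_pair hne
        rw [← h2]
        exact Finset.card_le_card hsub
      -- decompose the powerset sum
      have huW'' : u ∉ W' := fun h => huW'v (Finset.mem_insert_of_mem h)
      have edge_cond : ∀ A : Finset (Fin n),
          Cpt A (insert s(u, v) S') ↔ ((u ∈ A ↔ v ∈ A) ∧ Cpt A S') := by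
        intro A
        unfold Cpt
        rw [Finset.forall_mem_insert]
        constructor
        · rintro ⟨h1, h2⟩
          exact ⟨h1 u (Sym2.mem_mk_left u v) v (Sym2.mem_mk_right u v), h2⟩
        · rintro ⟨h1, h2⟩
          refine ⟨?_, h2⟩
          intro x hx y hy
          rcases Sym2.mem_iff.mp hx with rfl | rfl <;>
            rcases Sym2.mem_iff.mp hy with rfl | rfl
          · rfl
          · exact h1
          · exact h1.symm
          · rfl
      have sum1 : ∑ A ∈ W'.powerset, (if Cpt A (insert s(u, v) S') then z ^ A.card else 0)
          = ∑ A ∈ W'.powerset, (if Cpt A S' then z ^ A.card else 0) := by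
        refine Finset.sum_congr rfl (fun A hA => ?_)
        have hAsub := Finset.mem_powerset.mp hA
        have hu : u ∉ A := fun h => huW'' (hAsub h)
        have hv : v ∉ A := fun h => hvW' (hAsub h)
        congr 1
        rw [eq_iff_iff, edge_cond]
        simp [hu, hv]
      have sum2 : ∑ A ∈ W'.powerset, (if Cpt (insert v A) (insert s(u, v) S')
            then z ^ (insert v A).card else 0) = 0 := by
        refine Finset.sum_eq_zero (fun A hA => ?_)
        have hAsub := Finset.mem_powerset.mp hA
        have hu : u ∉ A := fun h => huW'' (hAsub h)
        rw [if_neg]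
        rw [edge_cond]
        push_neg
        intro h1
        exfalso
        have : u ∈ insert v A := h1.mpr (Finset.mem_insert_self v A)
        rcases Finset.mem_insert.mp this with h | h
        · exact hne h
        · exact hu h
      have sum3 : ∑ A ∈ W'.powerset, (if Cpt (insert u A) (insert s(u, v) S')
            then z ^ (insert u A).card else 0) = 0 := by
        refine Finset.sum_eq_zero (fun A hA => ?_)
        have hAsub := Finset.mem_powerset.mp hA
        have hv : v ∉ A := fun h => hvW' (hAsub h)
        rw [if_neg]
        rw [edge_cond]
        push_neg
        intro h1
        exfalso
        have : v ∈ insert u A := h1.mp (Finset.mem_insert_self u A)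
        rcases Finset.mem_insert.mp this with h | h
        · exact hne h.symm
        · exact hv h
      have sum4 : ∑ A ∈ W'.powerset, (if Cpt (insert u (insert v A)) (insert s(u, v) S')
            then z ^ (insert u (insert v A)).card else 0)
          = ∑ A ∈ W'.powerset, (if Cpt A S' then z ^ A.card * z ^ 2 else 0) := by
        refine Finset.sum_congr rfl (fun A hA => ?_)
        have hAsub := Finset.mem_powerset.mp hA
        have hu : u ∉ A := fun h => huW'' (hAsub h)
        have hv : v ∉ A := fun h => hvW' (hAsub h)
        have hu' : u ∉ insert v A := by
          simp only [Finset.mem_insert]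
          push_neg
          exact ⟨hne, hu⟩
        have hcards : (insert u (insert v A)).card = A.card + 2 := by
          rw [Finset.card_insert_of_notMem hu', Finset.card_insert_of_notMem hv]
        have hcpt : Cpt (insert u (insert v A)) (insert s(u, v) S') ↔ Cpt A S' := by
          rw [edge_cond]
          have e1 : Cpt (insert u (insert v A)) S' ↔ Cpt (insert v A) S' :=
            cpt_insert_of_not_mem hu_not
          have e2 : Cpt (insert v A) S' ↔ Cpt A S' := cpt_insert_of_not_mem hv_not
          simp [e1, e2]
        rw [hcpt, hcards]
        congr 1
        ring
      rw [← hWeq, Finset.sum_powerset_insert huW'v, Finset.sum_powerset_insert hvW',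
        sum1, sum2]
      have rest : ∑ A ∈ (insert v W').powerset,
            (if Cpt (insert u A) (insert s(u, v) S') then z ^ (insert u A).card else 0)
          = ∑ A ∈ W'.powerset, (if Cpt A S' then z ^ A.card * z ^ 2 else 0) := by
        rw [Finset.sum_powerset_insert hvW', sum3, zero_add, sum4]

      rw [rest]
      rw [ih W' hM' hW'sub]
      have hsplit : ∑ A ∈ W'.powerset, (if Cpt A S' then z ^ A.card * z ^ 2 else 0)
          = (∑ A ∈ W'.powerset, (if Cpt A S' then z ^ A.card else 0)) * z ^ 2 := by
        rw [Finset.sum_mul]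
        refine Finset.sum_congr rfl (fun A _ => ?_)
        split <;> ring
      rw [hsplit, ih W' hM' hW'sub]
      rw [Finset.card_insert_of_notMem he, hcard]
      have harith : W.card - 2 - 2 * S'.card = W.card - 2 * (S'.card + 1) := by omega
      rw [harith]
      rw [hWeq]
      ring


noncomputable def cw (a : ℕ) : ℝ := 1 - (Complex.I ^ a).re

lemma I_pow_mod (a : ℕ) : Complex.I ^ a = Complex.I ^ (a % 4) := by
  conv_lhs => rw [← Nat.div_add_mod a 4]
  rw [pow_add, pow_mul]
  norm_num [Complex.I_pow_four]

lemma cw_nonneg (a : ℕ) : 0 ≤ cw a := by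
  unfold cw
  rw [I_pow_mod]
  have h : a % 4 < 4 := Nat.mod_lt _ (by norm_num)
  interval_cases (a % 4) <;> norm_num [pow_succ, Complex.I_sq]

lemma cw_mod_four_eq_zero {a : ℕ} (h : a % 4 = 0) : cw a = 0 := by
  unfold cw
  rw [I_pow_mod, h]
  norm_num

noncomputable def mu (n : ℕ) : SimpleGraph (Fin n) → ℝ := fun G =>
  (∑ A : Finset (Fin n), if G = twoClique A then cw A.card else 0) / 2 ^ n
    + (if G = (⊥ : SimpleGraph (Fin n)) then (1 : ℝ) / 2 ^ (n / 2) else 0)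

lemma mu_nonneg (G : SimpleGraph (Fin n)) : 0 ≤ mu n G := by
  unfold mu
  have h1 : (0:ℝ) ≤ ∑ A : Finset (Fin n), if G = twoClique A then cw A.card else 0 :=
    Finset.sum_nonneg (fun A _ => by split
                                     · exact cw_nonneg _
                                     · exact le_rfl)
  have h2 : (0:ℝ) ≤ if G = (⊥ : SimpleGraph (Fin n)) then (1 : ℝ) / 2 ^ (n / 2) else 0 := by
    split
    · positivity
    · exact le_rfl
  exact add_nonneg (div_nonneg h1 (by positivity)) h2

lemma pr_eq (P : SimpleGraph (Fin n) → Prop) :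
    pr (mu n) P = (∑ A : Finset (Fin n), if P (twoClique A) then cw A.card else 0) / 2 ^ n
      + (if P (⊥ : SimpleGraph (Fin n)) then (1 : ℝ) / 2 ^ (n / 2) else 0) := by
  unfold pr mu
  have step1 : ∀ G : SimpleGraph (Fin n),
      (if P G then ((∑ A : Finset (Fin n), if G = twoClique A then cw A.card else 0) / 2 ^ n
        + (if G = (⊥ : SimpleGraph (Fin n)) then (1 : ℝ) / 2 ^ (n / 2) else 0)) else 0)
      = (∑ A : Finset (Fin n), if P G then (if G = twoClique A then cw A.card else 0) else 0) / 2 ^ n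
        + (if P G then (if G = (⊥ : SimpleGraph (Fin n)) then (1 : ℝ) / 2 ^ (n / 2) else 0) else 0) := by
    intro G
    split
    · rfl
    · simp
  rw [Finset.sum_congr rfl (fun G _ => step1 G)]
  rw [Finset.sum_add_distrib, ← Finset.sum_div, Finset.sum_comm]
  congr 1
  · congr 1
    refine Finset.sum_congr rfl (fun A _ => ?_)
    have swap : ∀ G : SimpleGraph (Fin n),
        (if P G then (if G = twoClique A then cw A.card else 0) else 0)
        = (if G = twoClique A then (if P G then cw A.card else 0) else 0) := by
      intro G
      by_cases h1 : P G <;> by_cases h2 : G = twoClique A <;> simp [h1, h2]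
    rw [Finset.sum_congr rfl (fun G _ => swap G)]
    rw [Finset.sum_ite_eq' Finset.univ (twoClique A)
      (fun G => if P G then cw A.card else 0)]
    simp
  · rw [Finset.sum_eq_single_of_mem (⊥ : SimpleGraph (Fin n)) (Finset.mem_univ _)]
    · simp
    · intro G _ hG
      simp [hG]

lemma matching_card_le (S : Finset (Sym2 (Fin n))) (W : Finset (Fin n))
    (hM : IsMatchingSet S) (hW : ∀ e ∈ S, ∀ v ∈ e, v ∈ W) : 2 * S.card ≤ W.card := by
  induction S using Finset.induction generalizing W with
  | empty => simp
  | @insert e S' he ih =>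
      obtain ⟨u, v, rfl⟩ : ∃ u v, e = s(u, v) := by
        induction e using Sym2.ind with
        | _ x y => exact ⟨x, y, rfl⟩
      have hne : u ≠ v := by
        have := hM.1 _ (Finset.mem_insert_self _ _)
        simpa [Sym2.mk_isDiag_iff] using this
      have huW : u ∈ W := hW _ (Finset.mem_insert_self _ _) u (Sym2.mem_mk_left u v)
      have hvW : v ∈ W := hW _ (Finset.mem_insert_self _ _) v (Sym2.mem_mk_right u v)
      have hu_not : ∀ f ∈ S', u ∉ f := fun f hf =>
        hM.2 _ (Finset.mem_insert_self _ _) f (Finset.mem_insert_of_mem hf)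
          (fun h => he (h ▸ hf)) u (Sym2.mem_mk_left u v)
      have hv_not : ∀ f ∈ S', v ∉ f := fun f hf =>
        hM.2 _ (Finset.mem_insert_self _ _) f (Finset.mem_insert_of_mem hf)
          (fun h => he (h ▸ hf)) v (Sym2.mem_mk_right u v)
      have hM' : IsMatchingSet S' := by
        refine ⟨fun f hf => hM.1 f (Finset.mem_insert_of_mem hf), ?_⟩
        intro a ha b hb hab
        exact hM.2 a (Finset.mem_insert_of_mem ha) b (Finset.mem_insert_of_mem hb) hab
      set W' : Finset (Fin n) := (W.erase u).erase v with hW'def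
      have hW'sub : ∀ f ∈ S', ∀ w ∈ f, w ∈ W' := by
        intro f hf w hw
        have hwW : w ∈ W := hW f (Finset.mem_insert_of_mem hf) w hw
        have hwu : w ≠ u := fun h => hu_not f hf (h ▸ hw)
        have hwv : w ≠ v := fun h => hv_not f hf (h ▸ hw)
        exact Finset.mem_erase.mpr ⟨hwv, Finset.mem_erase.mpr ⟨hwu, hwW⟩⟩
      have hcard : W'.card = W.card - 2 := by
        rw [hW'def, Finset.card_erase_of_mem (Finset.mem_erase.mpr ⟨hne.symm, hvW⟩),
          Finset.card_erase_of_mem huW]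
        omega
      have hWcard : 2 ≤ W.card := by
        have hsub : ({u, v} : Finset (Fin n)) ⊆ W := by
          intro w hw
          rcases Finset.mem_insert.mp hw with h | h
          · exact h ▸ huW
          · exact (Finset.mem_singleton.mp h) ▸ hvW
        have h2 : ({u, v} : Finset (Fin n)).card = 2 := Finset.card_pair hne
        rw [← h2]
        exact Finset.card_le_card hsub
      have := ih W' hM' hW'sub
      rw [Finset.card_insert_of_notMem he]
      omega

lemma forall_edge_iff_cpt (S : Finset (Sym2 (Fin n))) (hd : ∀ e ∈ S, ¬ e.IsDiag)
    (A : Finset (Fin n)) :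
    (∀ e ∈ S, e ∈ (twoClique A).edgeSet) ↔ Cpt A S := by
  unfold Cpt
  constructor
  · intro h e he x hx y hy
    obtain ⟨a, b, rfl⟩ : ∃ a b, e = s(a, b) := by
      induction e using Sym2.ind with
      | _ a b => exact ⟨a, b, rfl⟩
    have hadj := h _ he
    rw [SimpleGraph.mem_edgeSet] at hadj
    obtain ⟨-, hab⟩ : a ≠ b ∧ (a ∈ A ↔ b ∈ A) := hadj
    rcases Sym2.mem_iff.mp hx with rfl | rfl <;>
      rcases Sym2.mem_iff.mp hy with rfl | rfl
    · rfl
    · exact hab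
    · exact hab.symm
    · rfl
  · intro h e he
    obtain ⟨a, b, rfl⟩ : ∃ a b, e = s(a, b) := by
      induction e using Sym2.ind with
      | _ a b => exact ⟨a, b, rfl⟩
    rw [SimpleGraph.mem_edgeSet]
    refine ⟨?_, h _ he a (Sym2.mem_mk_left a b) b (Sym2.mem_mk_right a b)⟩
    intro hab
    exact hd _ he (by simp [Sym2.mk_isDiag_iff, hab])

lemma pr_matching (S : Finset (Sym2 (Fin n))) (hM : IsMatchingSet S) (hS : S.Nonempty) :
    pr (mu n) (fun G => ∀ e ∈ S, e ∈ G.edgeSet) = (1 / 2 : ℝ) ^ S.card := by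
  rw [pr_eq]
  have hbot : ¬ (∀ e ∈ S, e ∈ (⊥ : SimpleGraph (Fin n)).edgeSet) := by
    obtain ⟨e, he⟩ := hS
    intro h
    have := h e he
    simp [SimpleGraph.edgeSet_bot] at this
  rw [if_neg hbot, add_zero]
  simp only [fun A => forall_edge_iff_cpt S hM.1 A]
  have hWuniv : ∀ e ∈ S, ∀ v ∈ e, v ∈ (Finset.univ : Finset (Fin n)) :=
    fun e _ v _ => Finset.mem_univ v
  have hucard : (Finset.univ : Finset (Fin n)).card = n := by
    rw [Finset.card_univ, Fintype.card_fin]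
  have hk := matching_card_le S Finset.univ hM hWuniv
  rw [hucard] at hk
  have hsplit : (∑ A : Finset (Fin n), if Cpt A S then cw A.card else 0)
      = (∑ A : Finset (Fin n), if Cpt A S then (1 : ℝ) else 0)
        - ∑ A : Finset (Fin n), if Cpt A S then (Complex.I ^ A.card).re else 0 := by
    rw [← Finset.sum_sub_distrib]
    refine Finset.sum_congr rfl (fun A _ => ?_)
    unfold cw
    split <;> simp
  rw [hsplit]
  have hone := key (R := ℝ) 1 S Finset.univ hM hWuniv
  rw [Finset.powerset_univ, hucard] at hone
  simp only [one_pow] at hone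
  have hone' : (∑ A : Finset (Fin n), if Cpt A S then (1 : ℝ) else 0)
      = 2 ^ S.card * 2 ^ (n - 2 * S.card) := by
    rw [hone]
    norm_num
  have hI := key (R := ℂ) Complex.I S Finset.univ hM hWuniv
  rw [Finset.powerset_univ, hucard, Complex.I_sq] at hI
  have hzero : (1 : ℂ) + (-1) = 0 := by ring
  rw [hzero, zero_pow (Finset.card_pos.mpr hS).ne', zero_mul] at hI
  have hre : (∑ A : Finset (Fin n), if Cpt A S then (Complex.I ^ A.card).re else 0)
      = (∑ A : Finset (Fin n), if Cpt A S then Complex.I ^ A.card else 0).re := by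
    rw [Complex.re_sum]
    refine Finset.sum_congr rfl (fun A _ => ?_)
    split <;> simp
  rw [hre, hI, Complex.zero_re, sub_zero, hone']
  have h2n : (2 : ℝ) ^ n = 2 ^ S.card * (2 ^ S.card * 2 ^ (n - 2 * S.card)) := by
    rw [← pow_add, ← pow_add]
    congr 1
    omega
  rw [h2n]
  have hne : (2 : ℝ) ^ S.card ≠ 0 := by positivity
  have hne2 : (2 : ℝ) ^ (n - 2 * S.card) ≠ 0 := by positivity
  field_simp
  rw [← mul_pow]; norm_num

lemma one_add_I_pow_eight : ((1 : ℂ) + Complex.I) ^ 8 = 16 := by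
  have h2 : ((1 : ℂ) + Complex.I) ^ 2 = 2 * Complex.I := by
    have := Complex.I_sq
    ring_nf
    rw [Complex.I_sq]
    ring
  calc ((1 : ℂ) + Complex.I) ^ 8 = (((1 : ℂ) + Complex.I) ^ 2) ^ 4 := by ring
    _ = (2 * Complex.I) ^ 4 := by rw [h2]
    _ = 16 * (Complex.I ^ 2) ^ 2 := by ring
    _ = 16 := by rw [Complex.I_sq]; norm_num

lemma mu_total {m : ℕ} (hn : n = 8 * m) : ∑ G : SimpleGraph (Fin n), mu n G = 1 := by
  have h := pr_eq (n := n) (fun _ => True)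
  simp only [if_true] at h
  have hpr : pr (mu n) (fun _ => True) = ∑ G : SimpleGraph (Fin n), mu n G := by
    unfold pr
    simp
  rw [hpr] at h
  rw [h]
  have hucard : (Finset.univ : Finset (Fin n)).card = n := by
    rw [Finset.card_univ, Fintype.card_fin]
  have hM0 : IsMatchingSet (∅ : Finset (Sym2 (Fin n))) := by
    constructor <;> simp
  have hW0 : ∀ e ∈ (∅ : Finset (Sym2 (Fin n))), ∀ v ∈ e, v ∈ (Finset.univ : Finset (Fin n)) := by
    simp
  have hcpt0 : ∀ A : Finset (Fin n), Cpt A (∅ : Finset (Sym2 (Fin n))) :=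
    fun A e he => absurd he (Finset.notMem_empty e)
  -- sum of cw
  have hsplit : (∑ A : Finset (Fin n), cw A.card)
      = (∑ A : Finset (Fin n), (1 : ℝ)) - ∑ A : Finset (Fin n), (Complex.I ^ A.card).re := by
    rw [← Finset.sum_sub_distrib]
    rfl
  have hcount : (∑ A : Finset (Fin n), (1 : ℝ)) = 2 ^ n := by
    rw [Finset.sum_const, Finset.card_univ, Fintype.card_finset, Fintype.card_fin]
    simp
  have hI := key (R := ℂ) Complex.I (∅ : Finset (Sym2 (Fin n))) Finset.univ hM0 hW0
  rw [Finset.powerset_univ, hucard] at hI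
  simp only [Finset.card_empty, pow_zero, one_mul, Nat.mul_zero, Nat.sub_zero] at hI
  have hI' : (∑ A : Finset (Fin n), Complex.I ^ A.card) = (1 + Complex.I) ^ n := by
    rw [← hI]
    refine Finset.sum_congr rfl (fun A _ => ?_)
    rw [if_pos (hcpt0 A)]
  have hIm : ((1 : ℂ) + Complex.I) ^ n = ((16 : ℝ) ^ m : ℂ) := by
    rw [hn, pow_mul, one_add_I_pow_eight]
    push_cast
    ring
  -- put it together
  have hsum : (∑ A : Finset (Fin n), cw A.card) = 2 ^ n - 16 ^ m := by
    rw [hsplit, hcount]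
    congr 1
    rw [← Complex.re_sum, hI', hIm, ← Complex.ofReal_pow, Complex.ofReal_re]
  have hexp : (2 : ℝ) ^ (n / 2) = 16 ^ m := by
    have : n / 2 = 4 * m := by omega
    rw [this]
    rw [show (16 : ℝ) = 2 ^ 4 by norm_num, ← pow_mul]
  rw [hsum, hexp]
  have h16 : (16 : ℝ) ^ m ≠ 0 := by positivity
  have h2n : (2 : ℝ) ^ n ≠ 0 := by positivity
  have hsq : (2 : ℝ) ^ n = (16 ^ m) * (16 ^ m) := by
    rw [show (16 : ℝ) = 2 ^ 4 by norm_num, ← pow_mul, ← pow_add, hn]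
    congr 1
    omega
  rw [hsq]
  field_simp
  ring

lemma twoClique_walk_iff {A : Finset (Fin n)} {x y : Fin n}
    (w : (twoClique A).Walk x y) : x ∈ A ↔ y ∈ A := by
  induction w with
  | nil => rfl
  | cons h _ ih => exact h.2.trans ih

lemma twoClique_connected {A : Finset (Fin n)} (h : (twoClique A).Connected) :
    A = ∅ ∨ A = Finset.univ := by
  by_contra hcon
  push_neg at hcon
  obtain ⟨hne, hnu⟩ := hcon
  obtain ⟨a, ha⟩ := hne
  obtain ⟨b, hb⟩ : ∃ b, b ∉ A := by
    by_contra hall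
    push_neg at hall
    exact hnu (Finset.eq_univ_iff_forall.mpr hall)
  obtain ⟨w⟩ := h.preconnected a b
  exact hb ((twoClique_walk_iff w).mp ha)

lemma bot_not_connected (hn : 2 ≤ n) : ¬ (⊥ : SimpleGraph (Fin n)).Connected := by
  intro h
  have h01 : (⟨0, by omega⟩ : Fin n) ≠ ⟨1, by omega⟩ := by
    intro hh
    have := congrArg Fin.val hh
    simp at this
  obtain ⟨w⟩ := h.preconnected ⟨0, by omega⟩ ⟨1, by omega⟩
  cases w with
  | cons hadj _ => exact hadj

lemma matching_subset {M S : Finset (Sym2 (Fin n))} (hM : IsMatchingSet M) (hS : S ⊆ M) :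
    IsMatchingSet S :=
  ⟨fun e he => hM.1 e (hS he),
   fun e he f hf => hM.2 e (hS he) f (hS hf)⟩

lemma pr_single {m : ℕ} (hn : n = 8 * m) (e : Sym2 (Fin n)) (hd : ¬ e.IsDiag) :
    pr (mu n) (fun G => e ∈ G.edgeSet) = 1 / 2 := by
  have hM : IsMatchingSet ({e} : Finset (Sym2 (Fin n))) := by
    constructor
    · intro f hf
      rw [Finset.mem_singleton] at hf
      exact hf ▸ hd
    · intro a ha b hb hab
      rw [Finset.mem_singleton] at ha hb
      exact absurd (ha.trans hb.symm) hab
  have h := pr_matching ({e} : Finset (Sym2 (Fin n))) hM (Finset.singleton_nonempty e)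
  rw [Finset.card_singleton, pow_one] at h
  rw [← h]
  unfold pr
  refine Finset.sum_congr rfl (fun G _ => ?_)
  congr 1
  rw [eq_iff_iff]
  constructor
  · intro hG f hf
    rw [Finset.mem_singleton] at hf
    exact hf ▸ hG
  · intro hG
    exact hG e (Finset.mem_singleton_self e)

end MIHD

theorem matching_indep_half_disconnected (n : ℕ) (hpos : 0 < n) (hdvd : 8 ∣ n) :
    ∃ μ : SimpleGraph (Fin n) → ℝ, IsDist μ ∧ MatchingIndep μ ∧
      (∀ u v : Fin n, u ≠ v → pr μ (fun G => G.Adj u v) = 1 / 2) ∧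
      (∀ M : Finset (Sym2 (Fin n)), IsMatchingSet M → M.Nonempty →
        pr μ (fun G => ∀ e ∈ M, e ∈ G.edgeSet) = (1 / 2 : ℝ) ^ M.card) ∧
      (∀ G, 0 < μ G → ¬ G.Connected) := by
  obtain ⟨m, hm⟩ := hdvd
  have hn8 : 8 ≤ n := by omega
  refine ⟨MIHD.mu n, ⟨MIHD.mu_nonneg, MIHD.mu_total hm⟩, ?_, ?_, ?_, ?_⟩
  · -- MatchingIndep
    intro M hM S hsub
    have hMS : IsMatchingSet S := MIHD.matching_subset hM hsub
    by_cases hS : S.Nonempty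
    · rw [MIHD.pr_matching S hMS hS]
      have hRHS : ∀ e ∈ S, pr (MIHD.mu n) (fun G => e ∈ G.edgeSet) = 1 / 2 :=
        fun e he => MIHD.pr_single hm e (hMS.1 e he)
      rw [Finset.prod_congr rfl hRHS, Finset.prod_const]
    · rw [Finset.not_nonempty_iff_eq_empty] at hS
      subst hS
      simp only [Finset.notMem_empty, false_implies, implies_true, Finset.prod_empty]
      have : pr (MIHD.mu n) (fun _ => True) = 1 := by
        unfold pr
        simp only [if_true]
        exact MIHD.mu_total hm
      rw [← this]
  · -- edge probabilities
    intro u v huv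
    have hd : ¬ (s(u, v) : Sym2 (Fin n)).IsDiag := by
      simp [Sym2.mk_isDiag_iff, huv]
    have h := MIHD.pr_single hm s(u, v) hd
    rw [← h]
    unfold pr
    refine Finset.sum_congr rfl (fun G _ => ?_)
    exact if_congr (SimpleGraph.mem_edgeSet G).symm rfl rfl
  · -- matchings
    intro M hM hMne
    exact MIHD.pr_matching M hM hMne
  · -- disconnected support
    intro G hGpos hconn
    have hzero : MIHD.mu n G = 0 := by
      unfold MIHD.mu
      have hbot : G ≠ (⊥ : SimpleGraph (Fin n)) := by
        intro h
        exact MIHD.bot_not_connected (by omega) (h ▸ hconn)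
      rw [if_neg hbot, add_zero]
      have hterm : ∀ A : Finset (Fin n),
          (if G = MIHD.twoClique A then MIHD.cw A.card else 0) = 0 := by
        intro A
        split
        · rename_i hGA
          have hAconn : (MIHD.twoClique A).Connected := hGA ▸ hconn
          rcases MIHD.twoClique_connected hAconn with h | h
          · rw [h]
            simp [MIHD.cw_mod_four_eq_zero]
          · rw [h]
            apply MIHD.cw_mod_four_eq_zero
            rw [Finset.card_univ, Fintype.card_fin]
            omega
        · rfl
      rw [Finset.sum_congr rfl (fun A _ => hterm A)]
      simp
    rw [hzero] at hGpos
    exact lt_irrefl 0 hGpos
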